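/- Hypercontractivity for multilinear polynomials. Let n ≥ d ≥ 1 be integers and let P(x_1,…,x_n) = Σ_{S ⊆ {1,…,n}, |S| = d} a_S Π_{i∈S} x_i be a homogeneous multilinear polynomial of degree d with real coefficients. Let X_1,…,X_n be i.i.d. real random variables with E[X_1] = 0, E[X_1²] = 1 and E[X_1⁴] < ∞. Then E[P(X_1,…,X_n)⁴] ≤ (3 + 2·E[X_1⁴])^{2d} · (E[P(X_1,…,X_n)²])². -/

import Mathlib

open MeasureTheory ProbabilityTheory Finset

set_option linter.unusedSectionVars false
set_option maxHeartbeats 1000000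

section Helpers

variable {Ω : Type*} [MeasureSpace Ω] [IsProbabilityMeasure (ℙ : Measure Ω)]
variable {ι : Type*} [DecidableEq ι]

private lemma my_cs (f g : Ω → ℝ) (hf2 : Integrable (fun ω => f ω ^ 2))
    (hg2 : Integrable (fun ω => g ω ^ 2)) (hfg : Integrable (fun ω => f ω * g ω)) :
    (∫ ω, f ω * g ω) ^ 2 ≤ (∫ ω, f ω ^ 2) * (∫ ω, g ω ^ 2) := by
  have key : ∀ t : ℝ, 0 ≤ (∫ ω, f ω ^ 2) * (t * t) + (2 * ∫ ω, f ω * g ω) * t + ∫ ω, g ω ^ 2 := by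
    intro t
    have h1 : Integrable (fun ω => t ^ 2 * f ω ^ 2) := hf2.const_mul _
    have h2 : Integrable (fun ω => 2 * t * (f ω * g ω)) := hfg.const_mul _
    have heq : (∫ ω, f ω ^ 2) * (t * t) + (2 * ∫ ω, f ω * g ω) * t + ∫ ω, g ω ^ 2
        = ∫ ω, (t * f ω + g ω) ^ 2 := by
      rw [show (fun ω => (t * f ω + g ω) ^ 2)
          = fun ω => t ^ 2 * f ω ^ 2 + (2 * t * (f ω * g ω) + g ω ^ 2) from
        funext fun ω => by ring]
      have h23 : Integrable (fun ω => 2 * t * (f ω * g ω) + g ω ^ 2) := h2.add hg2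
      rw [integral_add h1 h23, integral_add h2 hg2, integral_const_mul,
        integral_const_mul]
      ring
    rw [heq]
    exact integral_nonneg fun ω => sq_nonneg _
  have h := discrim_le_zero key
  rw [discrim] at h
  nlinarith [h]

private lemma abs_pow_four (x : ℝ) : |x| ^ 4 = x ^ 4 := by
  rw [pow_abs, abs_of_nonneg (by positivity)]

private lemma integrable_pow_le {Y : Ω → ℝ} (hY : Measurable Y)
    (h4 : Integrable (fun ω => Y ω ^ 4)) {k : ℕ} (hk : k ≤ 4) :
    Integrable (fun ω => Y ω ^ k) := by
  apply Integrable.mono' ((integrable_const (1 : ℝ)).add h4)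
    ((hY.pow_const k).aestronglyMeasurable)
  filter_upwards with ω
  simp only [Pi.add_apply]
  rw [Real.norm_eq_abs, ← pow_abs]
  rcases le_total (|Y ω|) 1 with h | h
  · have h1 : |Y ω| ^ k ≤ 1 := pow_le_one₀ (abs_nonneg _) h
    nlinarith [sq_nonneg (Y ω ^ 2)]
  · have h1 : |Y ω| ^ k ≤ |Y ω| ^ 4 := pow_le_pow_right₀ h hk
    rw [abs_pow_four] at h1
    linarith

private lemma amgm31 (x y : ℝ) : |x ^ 3 * y| ≤ x ^ 4 + y ^ 4 := by
  rw [abs_mul, abs_pow, ← abs_pow_four x, ← abs_pow_four y]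
  nlinarith [sq_nonneg (|x| ^ 2 - |x| * |y|), sq_nonneg (|x| ^ 2 - |y| ^ 2),
    abs_nonneg x, abs_nonneg y, mul_nonneg (abs_nonneg x) (abs_nonneg y),
    sq_nonneg (|x| * |y|)]

private lemma amgm22 (x y : ℝ) : |x ^ 2 * y ^ 2| ≤ x ^ 4 + y ^ 4 := by
  rw [abs_mul, abs_pow, abs_pow, ← abs_pow_four x, ← abs_pow_four y]
  nlinarith [sq_nonneg (|x| ^ 2 - |y| ^ 2), abs_nonneg x, abs_nonneg y]

private lemma amgm11 (x y : ℝ) : |x * y| ≤ x ^ 2 + y ^ 2 := by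
  rw [abs_mul, ← sq_abs x, ← sq_abs y]
  nlinarith [sq_nonneg (|x| - |y|), abs_nonneg x, abs_nonneg y]

private lemma mask_indep (X : ι → Ω → ℝ) (hmeas : ∀ i, Measurable (X i))
    (hindep : iIndepFun X ℙ) {j : ι} {s : Finset ι} (hjs : j ∉ s)
    (φ : ℝ → ℝ) (hφ : Measurable φ) (F : (ι → ℝ) → ℝ) (hF : Measurable F) :
    IndepFun (fun ω => φ (X j ω)) (fun ω => F (fun i => if i ∈ s then X i ω else 0)) ℙ := by
  have h := hindep.indepFun_finset {j} s (Finset.disjoint_singleton_left.mpr hjs) hmeas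
  have hφ' : Measurable (fun v : ({j} : Finset ι) → ℝ => φ (v ⟨j, Finset.mem_singleton_self j⟩)) :=
    hφ.comp (measurable_pi_apply _)
  have hG : Measurable (fun (w : ↥s → ℝ) (i : ι) =>
      if h : i ∈ s then w ⟨i, h⟩ else 0) := by
    apply measurable_pi_lambda
    intro i
    by_cases h : i ∈ s
    · simp only [dif_pos h]; exact measurable_pi_apply _
    · simp only [dif_neg h]; exact measurable_const
  have h2 := h.comp hφ' (hF.comp hG)
  have heq : (fun ω => ((F ∘ fun (w : ↥s → ℝ) (i : ι) =>
        if h : i ∈ s then w ⟨i, h⟩ else 0) ∘ fun a (i : (s : Finset ι)) => X i a) ω)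
      = fun ω => F (fun i => if i ∈ s then X i ω else 0) := by
    funext ω
    simp only [Function.comp]
    refine congrArg F (funext fun i => ?_)
    by_cases h : i ∈ s
    · rw [dif_pos h, if_pos h]
    · rw [dif_neg h, if_neg h]
  exact heq ▸ h2

private lemma meas_poly (X : ι → Ω → ℝ) (hmeas : ∀ i, Measurable (X i)) (s : Finset ι) (d : ℕ)
    (a : Finset ι → ℝ) :
    Measurable (fun ω => ∑ T ∈ s.powersetCard d, a T * ∏ i ∈ T, X i ω) :=
  Finset.measurable_sum _ fun _ _ =>
    (Finset.measurable_prod _ fun i _ => hmeas i).const_mul _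

private lemma aux_d0 (X : ι → Ω → ℝ) (m : ℝ) (s : Finset ι) (a : Finset ι → ℝ) :
    Integrable (fun ω => (∑ T ∈ s.powersetCard 0, a T * ∏ i ∈ T, X i ω) ^ 4) ∧
    (∫ ω, (∑ T ∈ s.powersetCard 0, a T * ∏ i ∈ T, X i ω) ^ 4) ≤
      (3 + 2 * m) ^ (2 * 0) * (∫ ω, (∑ T ∈ s.powersetCard 0, a T * ∏ i ∈ T, X i ω) ^ 2) ^ 2 := by
  simp only [Finset.powersetCard_zero, Finset.sum_singleton, Finset.prod_empty, mul_one,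
    Nat.mul_zero, pow_zero, one_mul]
  refine ⟨integrable_const _, ?_⟩
  rw [integral_const, integral_const]
  simp only [measure_univ, probReal_univ, ENNReal.toReal_one, smul_eq_mul, one_mul]
  exact le_of_eq (by ring)

private theorem aux_main (X : ι → Ω → ℝ) (hmeas : ∀ i, Measurable (X i))
    (hindep : iIndepFun X ℙ)
    (m : ℝ) (hm1 : 1 ≤ m)
    (hmean : ∀ i, ∫ ω, X i ω = 0) (hvar : ∀ i, ∫ ω, (X i ω) ^ 2 = 1)
    (hfour : ∀ i, Integrable (fun ω => (X i ω) ^ 4))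
    (hfm : ∀ i, ∫ ω, (X i ω) ^ 4 = m)
    (s : Finset ι) :
    ∀ (d : ℕ) (a : Finset ι → ℝ),
      Integrable (fun ω => (∑ T ∈ s.powersetCard d, a T * ∏ i ∈ T, X i ω) ^ 4) ∧
      (∫ ω, (∑ T ∈ s.powersetCard d, a T * ∏ i ∈ T, X i ω) ^ 4) ≤
        (3 + 2 * m) ^ (2 * d) *
          (∫ ω, (∑ T ∈ s.powersetCard d, a T * ∏ i ∈ T, X i ω) ^ 2) ^ 2 := by
  induction s using Finset.induction_on with
  | empty =>
    intro d a
    match d with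
    | 0 => exact aux_d0 X m ∅ a
    | (e+1) =>
      rw [show Finset.powersetCard (e+1) (∅ : Finset ι) = ∅ from
        Finset.powersetCard_eq_empty.mpr (by simp)]
      simp
  | @insert j s hjs ih =>
    intro d a
    match d with
    | 0 => exact aux_d0 X m _ a
    | (e+1) =>
      obtain ⟨hQ4int, hQle⟩ := ih e (fun T => a (insert j T))
      obtain ⟨hR4int, hRle⟩ := ih (e+1) a
      set Q : Ω → ℝ := fun ω => ∑ T ∈ s.powersetCard e, a (insert j T) * ∏ i ∈ T, X i ω
        with hQdef
      set R : Ω → ℝ := fun ω => ∑ T ∈ s.powersetCard (e+1), a T * ∏ i ∈ T, X i ω with hRdef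
      have hQm : Measurable Q := meas_poly X hmeas s e _
      have hRm : Measurable R := meas_poly X hmeas s (e+1) a
      have hXjm := hmeas j
      -- splitting
      have hdisj : Disjoint (s.powersetCard (e+1)) ((s.powersetCard e).image (insert j)) := by
        rw [Finset.disjoint_left]
        intro T hT1 hT2
        obtain ⟨T', _, rfl⟩ := Finset.mem_image.mp hT2
        exact hjs ((Finset.mem_powersetCard.mp hT1).1 (Finset.mem_insert_self j T'))
      have hsplit : ∀ ω, (∑ T ∈ (insert j s).powersetCard (e+1), a T * ∏ i ∈ T, X i ω)
          = X j ω * Q ω + R ω := by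
        intro ω
        rw [Finset.powersetCard_succ_insert hjs, Finset.sum_union hdisj]
        have himg : ∑ T ∈ (s.powersetCard e).image (insert j), a T * ∏ i ∈ T, X i ω
            = X j ω * Q ω := by
          rw [Finset.sum_image]
          · rw [hQdef, Finset.mul_sum]
            apply Finset.sum_congr rfl
            intro T hT
            have hjT : j ∉ T := fun hj => hjs ((Finset.mem_powersetCard.mp hT).1 hj)
            rw [Finset.prod_insert hjT]; ring
          · intro T1 h1 T2 h2 h
            have hj1 : j ∉ T1 := fun hj => hjs ((Finset.mem_powersetCard.mp h1).1 hj)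
            have hj2 : j ∉ T2 := fun hj => hjs ((Finset.mem_powersetCard.mp h2).1 hj)
            rw [← Finset.erase_insert hj1, ← Finset.erase_insert hj2, h]
        rw [himg]; ring
      simp only [hsplit]
      -- integrability of powers
      have hXjk : ∀ k : ℕ, k ≤ 4 → Integrable (fun ω => X j ω ^ k) := fun k hk =>
        integrable_pow_le hXjm (hfour j) hk
      have hQ2int : Integrable (fun ω => Q ω ^ 2) := integrable_pow_le hQm hQ4int (by norm_num)
      have hR2int : Integrable (fun ω => R ω ^ 2) := integrable_pow_le hRm hR4int (by norm_num)
      have hQR44 : Integrable (fun ω => Q ω ^ 4 + R ω ^ 4) := hQ4int.add hR4int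
      have hQ3Rint : Integrable (fun ω => Q ω ^ 3 * R ω) :=
        hQR44.mono' ((hQm.pow_const 3).mul hRm).aestronglyMeasurable
          (ae_of_all _ fun ω => by rw [Real.norm_eq_abs]; exact amgm31 _ _)
      have hQ2R2int : Integrable (fun ω => Q ω ^ 2 * R ω ^ 2) :=
        hQR44.mono' ((hQm.pow_const 2).mul (hRm.pow_const 2)).aestronglyMeasurable
          (ae_of_all _ fun ω => by rw [Real.norm_eq_abs]; exact amgm22 _ _)
      have hQR3int : Integrable (fun ω => Q ω * R ω ^ 3) :=
        hQR44.mono' (hQm.mul (hRm.pow_const 3)).aestronglyMeasurable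
          (ae_of_all _ fun ω => by
            rw [Real.norm_eq_abs, mul_comm]
            have h := amgm31 (R ω) (Q ω)
            linarith)
      have hQRint : Integrable (fun ω => Q ω * R ω) :=
        (hQ2int.add hR2int).mono' (hQm.mul hRm).aestronglyMeasurable
          (ae_of_all _ fun ω => by rw [Real.norm_eq_abs]; exact amgm11 _ _)
      -- independence
      have hFQm : Measurable (fun v : ι → ℝ =>
          ∑ T ∈ s.powersetCard e, a (insert j T) * ∏ i ∈ T, v i) :=
        Finset.measurable_sum _ fun _ _ =>
          (Finset.measurable_prod _ fun i _ => measurable_pi_apply i).const_mul _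
      have hFRm : Measurable (fun v : ι → ℝ =>
          ∑ T ∈ s.powersetCard (e+1), a T * ∏ i ∈ T, v i) :=
        Finset.measurable_sum _ fun _ _ =>
          (Finset.measurable_prod _ fun i _ => measurable_pi_apply i).const_mul _
      have hmaskgen : ∀ (k : ℕ) (T : Finset ι), T ∈ s.powersetCard k →
          ∀ ω, (∏ i ∈ T, (if i ∈ s then X i ω else 0)) = ∏ i ∈ T, X i ω := by
        intro k T hT ω
        exact Finset.prod_congr rfl fun i hi => if_pos ((Finset.mem_powersetCard.mp hT).1 hi)
      have hind : ∀ (k aE bE : ℕ),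
          IndepFun (fun ω => X j ω ^ k) (fun ω => Q ω ^ aE * R ω ^ bE) ℙ := by
        intro k aE bE
        have h := mask_indep X hmeas hindep hjs (fun x => x ^ k) (measurable_id.pow_const k)
          (fun v => (∑ T ∈ s.powersetCard e, a (insert j T) * ∏ i ∈ T, v i) ^ aE *
            (∑ T ∈ s.powersetCard (e+1), a T * ∏ i ∈ T, v i) ^ bE)
          ((hFQm.pow_const _).mul (hFRm.pow_const _))
        have heq : (fun ω => (fun v : ι → ℝ =>
            (∑ T ∈ s.powersetCard e, a (insert j T) * ∏ i ∈ T, v i) ^ aE *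
              (∑ T ∈ s.powersetCard (e+1), a T * ∏ i ∈ T, v i) ^ bE)
            (fun i => if i ∈ s then X i ω else 0))
            = fun ω => Q ω ^ aE * R ω ^ bE := by
          funext ω
          simp only [hQdef, hRdef]
          congr 2
          · exact Finset.sum_congr rfl fun T hT => by rw [hmaskgen e T hT ω]
          · exact Finset.sum_congr rfl fun T hT => by rw [hmaskgen (e+1) T hT ω]
        rwa [heq] at h
      have h440 := hind 4 4 0
      have h331 := hind 3 3 1
      have h222 := hind 2 2 2
      have h113 := hind 1 1 3
      have h220 := hind 2 2 0
      have h111 := hind 1 1 1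
      simp only [pow_zero, mul_one, pow_one] at h440 h331 h222 h113 h220 h111
      -- integrable products
      have It1 : Integrable (fun ω => X j ω ^ 4 * Q ω ^ 4) :=
        h440.integrable_mul (hXjk 4 le_rfl) hQ4int
      have It2 : Integrable (fun ω => X j ω ^ 3 * (Q ω ^ 3 * R ω)) :=
        h331.integrable_mul (hXjk 3 (by norm_num)) hQ3Rint
      have It3 : Integrable (fun ω => X j ω ^ 2 * (Q ω ^ 2 * R ω ^ 2)) :=
        h222.integrable_mul (hXjk 2 (by norm_num)) hQ2R2int
      have It4 : Integrable (fun ω => X j ω * (Q ω * R ω ^ 3)) :=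
        h113.integrable_mul (by simpa using hXjk 1 (by norm_num)) hQR3int
      have It6 : Integrable (fun ω => X j ω ^ 2 * Q ω ^ 2) :=
        h220.integrable_mul (hXjk 2 (by norm_num)) hQ2int
      have It7 : Integrable (fun ω => X j ω * (Q ω * R ω)) :=
        h111.integrable_mul (by simpa using hXjk 1 (by norm_num)) hQRint
      -- expansions
      have hexp4 : ∀ ω, (X j ω * Q ω + R ω) ^ 4
          = X j ω ^ 4 * Q ω ^ 4 + 4 * (X j ω ^ 3 * (Q ω ^ 3 * R ω))
            + 6 * (X j ω ^ 2 * (Q ω ^ 2 * R ω ^ 2)) + 4 * (X j ω * (Q ω * R ω ^ 3)) + R ω ^ 4 :=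
        fun ω => by ring
      have S1 : Integrable (fun ω => X j ω ^ 4 * Q ω ^ 4
          + 4 * (X j ω ^ 3 * (Q ω ^ 3 * R ω))) := It1.add (It2.const_mul 4)
      have S2 : Integrable (fun ω => X j ω ^ 4 * Q ω ^ 4 + 4 * (X j ω ^ 3 * (Q ω ^ 3 * R ω))
          + 6 * (X j ω ^ 2 * (Q ω ^ 2 * R ω ^ 2))) := S1.add (It3.const_mul 6)
      have S3 : Integrable (fun ω => X j ω ^ 4 * Q ω ^ 4 + 4 * (X j ω ^ 3 * (Q ω ^ 3 * R ω))
          + 6 * (X j ω ^ 2 * (Q ω ^ 2 * R ω ^ 2)) + 4 * (X j ω * (Q ω * R ω ^ 3))) :=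
        S2.add (It4.const_mul 4)
      have hInt4 : Integrable (fun ω => (X j ω * Q ω + R ω) ^ 4) := by
        simp only [hexp4]
        exact S3.add hR4int
      refine ⟨hInt4, ?_⟩
      -- value of ∫ P^4
      have hIP4 : ∫ ω, (X j ω * Q ω + R ω) ^ 4
          = m * (∫ ω, Q ω ^ 4) + 4 * ((∫ ω, X j ω ^ 3) * (∫ ω, Q ω ^ 3 * R ω))
            + 6 * (∫ ω, Q ω ^ 2 * R ω ^ 2) + ∫ ω, R ω ^ 4 := by
        simp only [hexp4]
        rw [integral_add S3 hR4int,
          integral_add S2 (It4.const_mul 4),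
          integral_add S1 (It3.const_mul 6),
          integral_add It1 (It2.const_mul 4),
          integral_const_mul, integral_const_mul, integral_const_mul,
          h440.integral_fun_mul_eq_mul_integral (hXjm.pow_const 4).aestronglyMeasurable
            (hQm.pow_const 4).aestronglyMeasurable,
          h331.integral_fun_mul_eq_mul_integral (hXjm.pow_const 3).aestronglyMeasurable
            ((hQm.pow_const 3).mul hRm).aestronglyMeasurable,
          h222.integral_fun_mul_eq_mul_integral (hXjm.pow_const 2).aestronglyMeasurable
            ((hQm.pow_const 2).mul (hRm.pow_const 2)).aestronglyMeasurable,
          h113.integral_fun_mul_eq_mul_integral hXjm.aestronglyMeasurable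
            (hQm.mul (hRm.pow_const 3)).aestronglyMeasurable,
          hfm j, hvar j, hmean j]
        ring
      -- value of ∫ P^2
      have hexp2 : ∀ ω, (X j ω * Q ω + R ω) ^ 2
          = X j ω ^ 2 * Q ω ^ 2 + 2 * (X j ω * (Q ω * R ω)) + R ω ^ 2 := fun ω => by ring
      have hIP2 : ∫ ω, (X j ω * Q ω + R ω) ^ 2 = (∫ ω, Q ω ^ 2) + ∫ ω, R ω ^ 2 := by
        simp only [hexp2]
        have S4 : Integrable (fun ω => X j ω ^ 2 * Q ω ^ 2 + 2 * (X j ω * (Q ω * R ω))) :=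
          It6.add (It7.const_mul 2)
        rw [integral_add S4 hR2int,
          integral_add It6 (It7.const_mul 2), integral_const_mul,
          h220.integral_fun_mul_eq_mul_integral (hXjm.pow_const 2).aestronglyMeasurable
            (hQm.pow_const 2).aestronglyMeasurable,
          h111.integral_fun_mul_eq_mul_integral hXjm.aestronglyMeasurable (hQm.mul hRm).aestronglyMeasurable,
          hvar j, hmean j]
        ring
      rw [hIP4, hIP2]
      -- Cauchy-Schwarz
      have hsq : ∀ x : ℝ, (x ^ 2) ^ 2 = x ^ 4 := fun x => by ring
      have hQ22 : Integrable (fun ω => (Q ω ^ 2) ^ 2) := by simp only [hsq]; exact hQ4int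
      have hR22 : Integrable (fun ω => (R ω ^ 2) ^ 2) := by simp only [hsq]; exact hR4int
      have hcs := my_cs (fun ω => Q ω ^ 2) (fun ω => R ω ^ 2) hQ22 hR22 hQ2R2int
      simp only [hsq] at hcs
      -- third moment bound
      have hm3 : |∫ ω, X j ω ^ 3| ≤ (1 + m) / 2 := by
        have h1 : |∫ ω, X j ω ^ 3| ≤ ∫ ω, |X j ω ^ 3| := by
          simpa only [Real.norm_eq_abs] using
            norm_integral_le_integral_norm (μ := ℙ) (fun ω => X j ω ^ 3)
        have h2 : ∫ ω, |X j ω ^ 3| ≤ ∫ ω, (X j ω ^ 2 + X j ω ^ 4) / 2 := by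
          have hg2 : Integrable (fun ω => (X j ω ^ 2 + X j ω ^ 4) / 2) :=
            ((hXjk 2 (by norm_num)).add (hfour j)).div_const 2
          apply integral_mono (hXjk 3 (by norm_num)).abs hg2
          intro ω
          show |X j ω ^ 3| ≤ (X j ω ^ 2 + X j ω ^ 4) / 2
          have h3 : |X j ω ^ 3| = |X j ω| ^ 3 := abs_pow _ _
          have h4 : |X j ω| ^ 2 = X j ω ^ 2 := sq_abs _
          have h5 : |X j ω| ^ 4 = X j ω ^ 4 := abs_pow_four _
          simp only [h3]
          nlinarith [sq_nonneg (|X j ω| ^ 2 - |X j ω|), abs_nonneg (X j ω)]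
        have h3 : ∫ ω, (X j ω ^ 2 + X j ω ^ 4) / 2 = (1 + m) / 2 := by
          rw [integral_div, integral_add (hXjk 2 (by norm_num)) (hfour j), hvar j, hfm j]
        linarith
      -- bound on ∫ Q^3 R
      have hc31 : |∫ ω, Q ω ^ 3 * R ω| ≤ ((∫ ω, Q ω ^ 4) + ∫ ω, Q ω ^ 2 * R ω ^ 2) / 2 := by
        have h1 : |∫ ω, Q ω ^ 3 * R ω| ≤ ∫ ω, |Q ω ^ 3 * R ω| := by
          simpa only [Real.norm_eq_abs] using
            norm_integral_le_integral_norm (μ := ℙ) (fun ω => Q ω ^ 3 * R ω)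
        have h2 : ∫ ω, |Q ω ^ 3 * R ω| ≤ ∫ ω, (Q ω ^ 4 + Q ω ^ 2 * R ω ^ 2) / 2 := by
          have hg3 : Integrable (fun ω => (Q ω ^ 4 + Q ω ^ 2 * R ω ^ 2) / 2) :=
            (hQ4int.add hQ2R2int).div_const 2
          apply integral_mono hQ3Rint.abs hg3
          intro ω
          show |Q ω ^ 3 * R ω| ≤ (Q ω ^ 4 + Q ω ^ 2 * R ω ^ 2) / 2
          rcases abs_cases (Q ω ^ 3 * R ω) with ⟨heq, _⟩ | ⟨heq, _⟩ <;> rw [heq] <;>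
            nlinarith [sq_nonneg (Q ω ^ 2 - Q ω * R ω), sq_nonneg (Q ω ^ 2 + Q ω * R ω)]
        have h3 : ∫ ω, (Q ω ^ 4 + Q ω ^ 2 * R ω ^ 2) / 2
            = ((∫ ω, Q ω ^ 4) + ∫ ω, Q ω ^ 2 * R ω ^ 2) / 2 := by
          rw [integral_div, integral_add hQ4int hQ2R2int]
        linarith
      -- nonnegativity
      have hq4nn : 0 ≤ ∫ ω, Q ω ^ 4 := integral_nonneg fun ω => by positivity
      have hr4nn : 0 ≤ ∫ ω, R ω ^ 4 := integral_nonneg fun ω => by positivity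
      have hq2nn : 0 ≤ ∫ ω, Q ω ^ 2 := integral_nonneg fun ω => by positivity
      have hr2nn : 0 ≤ ∫ ω, R ω ^ 2 := integral_nonneg fun ω => by positivity
      have hcnn : 0 ≤ ∫ ω, Q ω ^ 2 * R ω ^ 2 := integral_nonneg fun ω => by positivity
      -- numerics
      have hBpos : (0 : ℝ) < 3 + 2 * m := by linarith
      have hKpos : (0 : ℝ) < (3 + 2 * m) ^ (2 * e) := pow_pos hBpos _
      have hpowsplit : (3 + 2 * m) ^ (2 * (e + 1))
          = (3 + 2 * m) ^ (2 * e) * (3 + 2 * m) ^ 2 := by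
        rw [show 2 * (e + 1) = 2 * e + 2 from by ring, pow_add]
      rw [hpowsplit] at hRle ⊢
      set K := (3 + 2 * m) ^ (2 * e) with hKdef
      set B := 3 + 2 * m with hBdef
      set q2 := ∫ ω, Q ω ^ 2
      set r2 := ∫ ω, R ω ^ 2
      set q4 := ∫ ω, Q ω ^ 4
      set r4 := ∫ ω, R ω ^ 4
      set c := ∫ ω, Q ω ^ 2 * R ω ^ 2
      set m3 := ∫ ω, X j ω ^ 3
      set c31 := ∫ ω, Q ω ^ 3 * R ω
      -- c ≤ K * B * q2 * r2
      have hub : q4 * r4 ≤ (K * q2 ^ 2) * (K * B ^ 2 * r2 ^ 2) :=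
        mul_le_mul hQle (by linarith [hRle]) hr4nn (by positivity)
      have hc2 : c ^ 2 ≤ (K * B * (q2 * r2)) ^ 2 := by nlinarith [hcs, hub]
      have hcle : c ≤ K * B * (q2 * r2) := by
        have hrhs : 0 ≤ K * B * (q2 * r2) := by positivity
        nlinarith [hc2, hcnn, hrhs]
      -- 4 * m3 * c31 bound
      have h4m : 4 * (m3 * c31) ≤ (1 + m) * (q4 + c) := by
        have h0 : m3 * c31 ≤ |m3| * |c31| := by
          rw [← abs_mul]; exact le_abs_self _
        have h1 : |m3| * |c31| ≤ ((1 + m) / 2) * ((q4 + c) / 2) :=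
          mul_le_mul hm3 hc31 (abs_nonneg _) (by linarith)
        nlinarith
      -- final assembly
      have e1 : m * q4 + 4 * (m3 * c31) + 6 * c + r4 ≤ (1 + 2 * m) * q4 + (7 + m) * c + r4 := by
        nlinarith [h4m, hq4nn, hcnn]
      have e2 : (1 + 2 * m) * q4 ≤ B ^ 2 * (K * q2 ^ 2) := by
        have : (1 + 2 * m) * q4 ≤ (1 + 2 * m) * (K * q2 ^ 2) :=
          mul_le_mul_of_nonneg_left hQle (by linarith)
        have hb2 : 1 + 2 * m ≤ B ^ 2 := by rw [hBdef]; nlinarith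
        nlinarith [mul_nonneg hKpos.le (sq_nonneg q2)]
      have e3 : (7 + m) * c ≤ 2 * B * (K * B * (q2 * r2)) := by
        have h7 : 7 + m ≤ 2 * B := by rw [hBdef]; linarith
        have : (7 + m) * c ≤ (7 + m) * (K * B * (q2 * r2)) :=
          mul_le_mul_of_nonneg_left hcle (by linarith)
        nlinarith [mul_nonneg (mul_nonneg hKpos.le hBpos.le)
          (mul_nonneg hq2nn hr2nn)]
      have e4 : r4 ≤ K * B ^ 2 * r2 ^ 2 := by linarith [hRle]
      calc m * q4 + 4 * (m3 * c31) + 6 * c + r4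
          ≤ (1 + 2 * m) * q4 + (7 + m) * c + r4 := e1
        _ ≤ B ^ 2 * (K * q2 ^ 2) + 2 * B * (K * B * (q2 * r2)) + K * B ^ 2 * r2 ^ 2 := by
            linarith [e2, e3, e4]
        _ = K * B ^ 2 * (q2 + r2) ^ 2 := by ring

end Helpers

/-- **Hypercontractivity for multilinear polynomials.** Let `n ≥ d ≥ 1` and let
`P(x) = Σ_{S ⊆ {1,…,n}, |S| = d} a_S Π_{i∈S} x_i` be a homogeneous multilinear
polynomial of degree `d`. If `X_1,…,X_n` are i.i.d. with mean `0`, variance `1`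
and finite fourth moment, then
`E[P(X)⁴] ≤ (3 + 2 E[X_1⁴])^{2d} (E[P(X)²])²`. -/
theorem multilinear_hypercontractivity
    {Ω : Type*} [MeasureSpace Ω] [IsProbabilityMeasure (ℙ : Measure Ω)]
    (n d : ℕ) (hd : 1 ≤ d) (hdn : d ≤ n)
    (a : Finset (Fin n) → ℝ)
    (X : Fin n → Ω → ℝ) (hmeas : ∀ i, Measurable (X i))
    (hindep : iIndepFun X ℙ)
    (hident : ∀ i j, Measure.map (X i) ℙ = Measure.map (X j) ℙ)
    (hmean : ∀ i, ∫ ω, X i ω = 0)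
    (hvar : ∀ i, ∫ ω, (X i ω) ^ 2 = 1)
    (hfourth : ∀ i, Integrable (fun ω => (X i ω) ^ 4)) :
    (∫ ω, (∑ S ∈ Finset.univ.powersetCard d, a S * ∏ i ∈ S, X i ω) ^ 4) ≤
      (3 + 2 * ∫ ω, (X ⟨0, by omega⟩ ω) ^ 4) ^ (2 * d) *
        (∫ ω, (∑ S ∈ Finset.univ.powersetCard d, a S * ∏ i ∈ S, X i ω) ^ 2) ^ 2 := by
  have hn0 : 0 < n := by omega
  set i0 : Fin n := ⟨0, by omega⟩ with hi0
  have hfm : ∀ i, ∫ ω, (X i ω) ^ 4 = ∫ ω, (X i0 ω) ^ 4 := by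
    intro i
    have hsm : ∀ k : Fin n, AEStronglyMeasurable (fun x : ℝ => x ^ 4)
        (Measure.map (X k) ℙ) := fun k => (measurable_id.pow_const 4).aestronglyMeasurable
    calc ∫ ω, (X i ω) ^ 4 = ∫ x, x ^ 4 ∂(Measure.map (X i) ℙ) :=
          (integral_map (hmeas i).aemeasurable (hsm i)).symm
      _ = ∫ x, x ^ 4 ∂(Measure.map (X i0) ℙ) := by rw [hident i i0]
      _ = ∫ ω, (X i0 ω) ^ 4 := integral_map (hmeas i0).aemeasurable (hsm i0)
  have h2int : Integrable (fun ω => X i0 ω ^ 2) :=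
    integrable_pow_le (hmeas i0) (hfourth i0) (by norm_num)
  have hm1 : 1 ≤ ∫ ω, (X i0 ω) ^ 4 := by
    have h0 : 0 ≤ ∫ ω, (X i0 ω ^ 2 - 1) ^ 2 := integral_nonneg fun ω => sq_nonneg _
    have heq : ∫ ω, (X i0 ω ^ 2 - 1) ^ 2
        = (∫ ω, X i0 ω ^ 4) - 2 * (∫ ω, X i0 ω ^ 2) + 1 := by
      simp only [show ∀ x : ℝ, (x ^ 2 - 1) ^ 2 = x ^ 4 - 2 * x ^ 2 + 1 from fun x => by ring]
      have hsub : Integrable (fun ω => X i0 ω ^ 4 - 2 * X i0 ω ^ 2) :=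
        (hfourth i0).sub (h2int.const_mul 2)
      rw [integral_add hsub (integrable_const 1), integral_sub (hfourth i0) (h2int.const_mul 2),
        integral_const_mul, integral_const]
      simp [measure_univ]
    rw [heq, hvar i0] at h0
    linarith
  exact (aux_main X hmeas hindep (∫ ω, (X i0 ω) ^ 4) hm1 hmean hvar hfourth hfm
    Finset.univ d a).2
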